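/- Let F = C(q^{1/2}, t^{1/2}) and consider the operators on F(X) (rational functions in X): multiplication by x = X + X^{-1}, and y = V(X)ϖ + V(X^{-1})ϖ^{-1}, z = q^{-1/2}X^{-1}V(X)ϖ + q^{-1/2}X V(X^{-1})ϖ^{-1}, where V(X) = (t^{1/2}X - t^{-1/2}X^{-1})/(X - X^{-1}) and (ϖ f)(X) = f(qX). Then these operators satisfy q^{1/2}xy - q^{-1/2}yx = (q - q^{-1})z. -/

import Mathlib

noncomputable section

/-- in the polynomial representation on `F(X)` (`F = ℂ(q^{1/2}, t^{1/2})`,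
here an arbitrary field containing `q2 = q^{1/2}` and `t2 = t^{1/2}`), the operators
`x = X + X⁻¹`, `y = V(X)ϖ + V(X⁻¹)ϖ⁻¹`, `z = q^{-1/2}X⁻¹V(X)ϖ + q^{-1/2}XV(X⁻¹)ϖ⁻¹`
(where `ϖ` is the `F`-algebra automorphism of `F(X)` with `ϖ(X) = qX`,
`V(X) = (t^{1/2}X - t^{-1/2}X⁻¹)/(X - X⁻¹)`) satisfy
`q^{1/2}·x∘y - q^{-1/2}·y∘x = (q - q⁻¹)·z`. -/
theorem skein_commutator_polynomial_rep
    (F : Type*) [Field F] (q2 t2 : F) (hq : q2 ≠ 0) (ht : t2 ≠ 0)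
    (ϖ : RatFunc F ≃ₐ[F] RatFunc F)
    (hϖ : ϖ RatFunc.X = algebraMap F (RatFunc F) (q2 ^ 2) * RatFunc.X) :
    let X : RatFunc F := RatFunc.X
    let c : F → RatFunc F := algebraMap F (RatFunc F)
    let V : RatFunc F := (c t2 * X - c t2⁻¹ * X⁻¹) / (X - X⁻¹)
    let W : RatFunc F := (c t2 * X⁻¹ - c t2⁻¹ * X) / (X⁻¹ - X)
    let x : RatFunc F →ₗ[F] RatFunc F := LinearMap.mulLeft F (X + X⁻¹)
    let y : RatFunc F →ₗ[F] RatFunc F :=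
      LinearMap.mulLeft F V ∘ₗ ϖ.toLinearMap + LinearMap.mulLeft F W ∘ₗ ϖ.symm.toLinearMap
    let z : RatFunc F →ₗ[F] RatFunc F :=
      LinearMap.mulLeft F (c q2⁻¹ * X⁻¹ * V) ∘ₗ ϖ.toLinearMap +
        LinearMap.mulLeft F (c q2⁻¹ * X * W) ∘ₗ ϖ.symm.toLinearMap
    q2 • (x ∘ₗ y) - q2⁻¹ • (y ∘ₗ x) = (q2 ^ 2 - (q2 ^ 2)⁻¹) • z := by
  intro X c V W x y z
  clear_value V W
  have hXne : X ≠ 0 := RatFunc.X_ne_zero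
  have hcq : c q2 ≠ 0 := by
    simpa [c] using (map_ne_zero (algebraMap F (RatFunc F))).mpr hq
  have hc2 : c (q2 ^ 2) ≠ 0 := by
    simpa [c] using (map_ne_zero (algebraMap F (RatFunc F))).mpr (pow_ne_zero 2 hq)
  have hϖX : ϖ X = c (q2 ^ 2) * X := hϖ
  have hϖXi : ϖ X⁻¹ = (c (q2 ^ 2))⁻¹ * X⁻¹ := by
    rw [map_inv₀, hϖX, mul_inv]
  have hsX : ϖ.symm X = (c (q2 ^ 2))⁻¹ * X := by
    apply ϖ.injective
    rw [AlgEquiv.apply_symm_apply, map_mul, map_inv₀, AlgEquiv.commutes, hϖX]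
    rw [← mul_assoc, inv_mul_cancel₀ hc2, one_mul]
  have hsXi : ϖ.symm X⁻¹ = c (q2 ^ 2) * X⁻¹ := by
    rw [map_inv₀, hsX, mul_inv, inv_inv]
  apply LinearMap.ext
  intro f
  simp only [x, y, z, LinearMap.sub_apply, LinearMap.smul_apply, LinearMap.comp_apply,
    LinearMap.add_apply, LinearMap.mulLeft_apply, AlgEquiv.toLinearMap_apply,
    map_add, map_mul, hϖX, hϖXi, hsX, hsXi]
  set A := ϖ f with hA
  set B := ϖ.symm f with hB
  rw [Algebra.smul_def, Algebra.smul_def, Algebra.smul_def]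
  simp only [map_sub, map_inv₀, map_pow]
  have hCq : (RatFunc.C q2 : RatFunc F) ≠ 0 := by
    simpa [c, RatFunc.algebraMap_eq_C] using hcq
  field_simp [c, RatFunc.algebraMap_eq_C, hXne, hCq]
  have haq : algebraMap F (RatFunc F) q2 ≠ 0 := hcq
  simp only [c, map_pow, map_inv₀]
  field_simp
  have hinv : algebraMap F (RatFunc F) q2 * algebraMap F (RatFunc F) (1 / q2) = 1 := by
    rw [← map_mul, mul_one_div_cancel hq, map_one]
  linear_combination (-(algebraMap F (RatFunc F) q2 ^ 4 * X ^ 2 * W * B + algebraMap F (RatFunc F) q2 ^ 4 * V * A - X ^ 2 * W * B - V * A)) * hinv
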